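/- For l1 preferences, the set of equilibrium aggregate distributions need not be convex: there is a 3-agent, 4-alternative instance with two equilibrium aggregate distributions whose midpoint is not an equilibrium aggregate distribution. -/

import Mathlib

def IsStrategy (n m : ℕ) (d : Fin m → ℝ) : Prop :=
  (∀ x, 0 ≤ d x) ∧ ∑ x, d x = 1 / n

def IsNash (n m : ℕ) (u : Fin n → (Fin m → ℝ) → ℝ) (δ : Fin n → Fin m → ℝ) : Prop :=
  (∀ i, IsStrategy n m (δ i)) ∧
  ∀ i, ∀ d, IsStrategy n m d →
    u i ((∑ j, δ j) - δ i + d) ≤ u i (∑ j, δ j)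

def l1Util {m : ℕ} (p : Fin m → ℝ) (d : Fin m → ℝ) : ℝ :=
  -∑ x, |d x - p x|

/-- Peaks of the 3-agent, 4-alternative counterexample. -/
noncomputable def peaks : Fin 3 → Fin 4 → ℝ :=
  ![![3/10, 3/10, 0, 4/10],
    ![2/10, 2/10, 6/10, 0],
    ![2/10, 2/10, 6/10, 0]]

/-- The set of equilibrium aggregate distributions for the ℓ₁ game with `peaks`. -/
def eqAgg : Set (Fin 4 → ℝ) :=
  {d | ∃ δ : Fin 3 → Fin 4 → ℝ,
    IsNash 3 4 (fun i => l1Util (peaks i)) δ ∧ (∀ x, (∑ i, δ i x) = d x)}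

lemma nash_suff {n m : ℕ} (p δ : Fin n → Fin m → ℝ)
    (hstr : ∀ i, IsStrategy n m (δ i))
    (h : ∀ i x, 0 < δ i x → (∑ j, δ j) x ≤ p i x) :
    IsNash n m (fun i => l1Util (p i)) δ := by
  refine ⟨hstr, fun i d hd => ?_⟩
  simp only [l1Util, neg_le_neg_iff, Pi.add_apply, Pi.sub_apply]
  calc ∑ x, |(∑ j, δ j) x - p i x|
      = ∑ x, (|(∑ j, δ j) x - δ i x - p i x| - δ i x) := by
        refine Finset.sum_congr rfl fun x _ => ?_
        rcases eq_or_lt_of_le ((hstr i).1 x) with h0 | h0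
        · rw [← h0]; ring_nf
        · have h1 := h i x h0
          have h2 : (∑ j, δ j) x - δ i x ≤ p i x := by linarith
          rw [abs_of_nonpos (by linarith), abs_of_nonpos (by linarith)]; ring
    _ = (∑ x, |(∑ j, δ j) x - δ i x - p i x|) - ∑ x, δ i x := by
        rw [Finset.sum_sub_distrib]
    _ = (∑ x, |(∑ j, δ j) x - δ i x - p i x|) - ∑ x, d x := by
        rw [(hstr i).2, hd.2]
    _ = ∑ x, (|(∑ j, δ j) x - δ i x - p i x| - d x) := by
        rw [Finset.sum_sub_distrib]
    _ ≤ ∑ x, |(∑ j, δ j) x - δ i x + d x - p i x| := by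
        refine Finset.sum_le_sum fun x _ => ?_
        have h1 := abs_sub_abs_le_abs_sub ((∑ j, δ j) x - δ i x - p i x)
          ((∑ j, δ j) x - δ i x + d x - p i x)
        have h2 : ((∑ j, δ j) x - δ i x - p i x) - ((∑ j, δ j) x - δ i x + d x - p i x)
            = -(d x) := by ring
        rw [h2, abs_neg, abs_of_nonneg (hd.1 x)] at h1
        linarith

lemma contrib_zero {n m : ℕ} (p δ : Fin n → Fin m → ℝ)
    (hnash : IsNash n m (fun i => l1Util (p i)) δ)
    (i : Fin n) (x y : Fin m)
    (hx : p i x < (∑ j, δ j) x) (hy : (∑ j, δ j) y < p i y) :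
    δ i x = 0 := by
  obtain ⟨hstr, hbr⟩ := hnash
  by_contra hne
  have hpos : 0 < δ i x := lt_of_le_of_ne ((hstr i).1 x) (Ne.symm hne)
  have hxy : x ≠ y := by rintro rfl; linarith
  set ε := min (δ i x) (min ((∑ j, δ j) x - p i x) (p i y - (∑ j, δ j) y)) with hε
  have hε0 : 0 < ε := lt_min hpos (lt_min (by linarith) (by linarith))
  have hε1 : ε ≤ δ i x := min_le_left _ _
  have hε2 : ε ≤ (∑ j, δ j) x - p i x := le_trans (min_le_right _ _) (min_le_left _ _)
  have hε3 : ε ≤ p i y - (∑ j, δ j) y := le_trans (min_le_right _ _) (min_le_right _ _)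
  set d := fun z => δ i z + (if z = y then ε else 0) - (if z = x then ε else 0) with hd
  have hds : IsStrategy n m d := by
    constructor
    · intro z
      by_cases hzx : z = x
      · subst hzx; simp [hd, hxy]; linarith
      · by_cases hzy : z = y
        · subst hzy; simp [hd, hzx]; have := (hstr i).1 z; linarith
        · simp [hd, hzx, hzy]; exact (hstr i).1 z
    · simp [hd, Finset.sum_add_distrib, Finset.sum_sub_distrib, (hstr i).2]
  have hle := hbr i d hds
  simp only [l1Util, neg_le_neg_iff, Pi.add_apply, Pi.sub_apply] at hle
  have key : ∀ z, |(∑ j, δ j) z - δ i z + d z - p i z|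
      = |(∑ j, δ j) z - p i z| - (if z = x then ε else 0) - (if z = y then ε else 0) := by
    intro z
    by_cases hzx : z = x
    · rw [hzx]
      have hdx : d x = δ i x - ε := by simp [hd, hxy]
      rw [hdx, if_pos rfl, if_neg hxy,
        abs_of_nonneg (by linarith : (0:ℝ) ≤ (∑ j, δ j) x - δ i x + (δ i x - ε) - p i x),
        abs_of_nonneg (by linarith : (0:ℝ) ≤ (∑ j, δ j) x - p i x)]
      ring
    · by_cases hzy : z = y
      · rw [hzy]
        have hdy : d y = δ i y + ε := by simp [hd, Ne.symm hxy]
        rw [hdy, if_pos rfl, if_neg (Ne.symm hxy),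
          abs_of_nonpos (by linarith : (∑ j, δ j) y - δ i y + (δ i y + ε) - p i y ≤ 0),
          abs_of_nonpos (by linarith : (∑ j, δ j) y - p i y ≤ 0)]
        ring
      · have hdz : d z = δ i z := by simp [hd, hzx, hzy]
        rw [hdz, if_neg hzx, if_neg hzy]
        ring_nf
  rw [Finset.sum_congr rfl fun z _ => key z] at hle
  simp only [Finset.sum_sub_distrib, Finset.sum_ite_eq', Finset.mem_univ, if_pos] at hle
  linarith

/-- the set of equilibrium aggregate distributions is not convex:
`δ` and `δ'` below are equilibrium aggregates, but their midpoint is not. -/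
theorem l1_equilibrium_aggregates_not_convex :
    (![3/10, 2/10, 14/30, 1/30] : Fin 4 → ℝ) ∈ eqAgg ∧
    (![2/10, 3/10, 14/30, 1/30] : Fin 4 → ℝ) ∈ eqAgg ∧
    (![1/4, 1/4, 14/30, 1/30] : Fin 4 → ℝ) ∉ eqAgg := by
  refine ⟨?_, ?_, ?_⟩
  · refine ⟨![![3/10, 0, 0, 1/30], ![0, 1/10, 7/30, 0], ![0, 1/10, 7/30, 0]],
      nash_suff _ _ ?_ ?_, ?_⟩
    · intro i
      fin_cases i <;>
        exact ⟨fun x => by fin_cases x <;> norm_num,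
          by norm_num [Fin.sum_univ_four, Matrix.cons_val_two, Matrix.cons_val_three, Matrix.vecHead, Matrix.vecTail]⟩
    · intro i x hpos
      fin_cases i <;> fin_cases x <;>
        simp_all [Fin.sum_univ_three, peaks, Matrix.vecHead, Matrix.vecTail] <;> norm_num
    · intro x
      fin_cases x <;> norm_num [Fin.sum_univ_three, Matrix.cons_val_two, Matrix.cons_val_three, Matrix.vecHead, Matrix.vecTail]
  · refine ⟨![![0, 3/10, 0, 1/30], ![1/10, 0, 7/30, 0], ![1/10, 0, 7/30, 0]],
      nash_suff _ _ ?_ ?_, ?_⟩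
    · intro i
      fin_cases i <;>
        exact ⟨fun x => by fin_cases x <;> norm_num,
          by norm_num [Fin.sum_univ_four, Matrix.cons_val_two, Matrix.cons_val_three, Matrix.vecHead, Matrix.vecTail]⟩
    · intro i x hpos
      fin_cases i <;> fin_cases x <;>
        simp_all [Fin.sum_univ_three, peaks, Matrix.vecHead, Matrix.vecTail] <;> norm_num
    · intro x
      fin_cases x <;> norm_num [Fin.sum_univ_three, Matrix.cons_val_two, Matrix.cons_val_three, Matrix.vecHead, Matrix.vecTail]
  · rintro ⟨δ, hnash, hagg⟩
    have hstr := hnash.1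
    have hS : ∀ x, (∑ j, δ j) x = (![1/4, 1/4, 14/30, 1/30] : Fin 4 → ℝ) x := by
      intro x; rw [Finset.sum_apply]; exact hagg x
    have hz : ∀ i : Fin 3, i ≠ 0 → ∀ x : Fin 4, x ≠ 2 → δ i x = 0 := by
      intro i hi x hx2
      refine contrib_zero peaks δ hnash i x 2 ?_ ?_
      · fin_cases i
        · exact absurd rfl hi
        all_goals
          fin_cases x <;> first
            | exact absurd rfl hx2
            | (rw [hS]; norm_num [peaks, Matrix.vecHead, Matrix.vecTail])
      · fin_cases i
        · exact absurd rfl hi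
        all_goals (rw [hS]; norm_num [peaks, Matrix.cons_val_two, Matrix.cons_val_three, Matrix.vecHead, Matrix.vecTail])
    have h1 : δ 1 2 = 1/3 := by
      have := (hstr 1).2
      rw [Fin.sum_univ_four] at this
      rw [hz 1 (by decide) 0 (by decide), hz 1 (by decide) 1 (by decide),
        hz 1 (by decide) 3 (by decide)] at this
      linarith
    have h2 : δ 2 2 = 1/3 := by
      have := (hstr 2).2
      rw [Fin.sum_univ_four] at this
      rw [hz 2 (by decide) 0 (by decide), hz 2 (by decide) 1 (by decide),
        hz 2 (by decide) 3 (by decide)] at this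
      linarith
    have h0 : 0 ≤ δ 0 2 := (hstr 0).1 2
    have hsum := hS 2
    rw [Finset.sum_apply, Fin.sum_univ_three] at hsum
    simp only [Matrix.cons_val_two, Matrix.vecHead, Matrix.vecTail] at hsum
    rw [h1, h2] at hsum
    norm_num at hsum
    linarith
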